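/- Let u be a tempered distribution on ℝⁿ with supp 𝓕u ⊂ K̃ = {ξ : 1/2 < |ξ| < 1}, and let R_s be extended to tempered distributions by the same formula. Then there is s_0 > 0, depending only on η, such that for each s ≥ s_0 there is m ∈ ℕ (depending on s) with supp 𝓕(R_s u) ⊂ K_m ∪ K_{m+1} ∪ K_{m+2}. More precisely: if η = 0 then supp 𝓕(R_s u) ⊂ {ξ : s^τ/2 < |ξ| < s^τ}, and if η ≠ 0 then for all s with 2 s^τ < s|η| one has supp 𝓕(R_s u) ⊂ {ξ : s|η|/2 < |ξ| < 2 s|η|}. -/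

import Mathlib

/-!
Statement 9: Let u be a tempered distribution on ℝⁿ with supp 𝓕u ⊂ K̃ = {1/2 < |ξ| < 1},
with R_s extended to tempered distributions by the same formula
(R_s u)(x) = s^{τn/p} e^{i s x·η} u(s^τ(x − y)).
Then there is s₀ > 0, depending only on η, such that for each s ≥ s₀ there is m ∈ ℕ with
supp 𝓕(R_s u) ⊂ K_m ∪ K_{m+1} ∪ K_{m+2}. More precisely: if η = 0,
supp 𝓕(R_s u) ⊂ {s^τ/2 < |ξ| < s^τ}; and if η ≠ 0 then for all s with 2 s^τ < s|η|,
supp 𝓕(R_s u) ⊂ {s|η|/2 < |ξ| < 2 s|η|}.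

A tempered distribution is modeled as a continuous linear functional
T : 𝒮(ℝⁿ) → ℂ.  The support conditions on 𝓕T and 𝓕(R_s T) are expressed by their
canonical duality characterizations: 𝓕T(h) = T(𝓕h), so supp 𝓕T avoids an open set
where the (plain-function) Fourier transform of each test function g = 𝓕h is supported
away from it; similarly (R_s T)(𝓕h) = T(R_sᵗ 𝓕h), and with g = R_sᵗ(𝓕h) the function
𝓕h = (R_sᵗ)^{-1} g is given by x ↦ s^{τn − τn/p} e^{−i s x·η} g(s^τ(x−y)), whose
(inverse) Fourier transform ξ ↦ ∫ e^{i x·ξ} (R_sᵗ)^{-1}g (x) dx must be supported away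
from the target set.
-/

open MeasureTheory Real Complex Filter Topology ENNReal

noncomputable section

abbrev En (n : ℕ) := EuclideanSpace ℝ (Fin n)

/-- Fourier transform with the convention `û(ξ) = ∫ e^{−i x·ξ} u(x) dx`. -/
def paperFT (n : ℕ) (g : En n → ℂ) (ξ : En n) : ℂ :=
  ∫ x : En n, Complex.exp (-(Complex.I * ((inner ℝ x ξ : ℝ) : ℂ))) * g x

/-- The sets `K_0 = {|ξ| ≤ 2}`, `K_j = {2^{j−1} ≤ |ξ| ≤ 2^{j+1}}`. -/
def Kset (n : ℕ) : ℕ → Set (En n)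
  | 0 => {ξ | ‖ξ‖ ≤ 2}
  | (j + 1) => {ξ | (2 : ℝ) ^ (j : ℤ) ≤ ‖ξ‖ ∧ ‖ξ‖ ≤ (2 : ℝ) ^ ((j : ℤ) + 2)}

/-- `supp 𝓕T ⊆ A` for a tempered distribution `T`, via duality:
`𝓕T(h) = T(𝓕h) = 0` whenever `supp h ∩ A = ∅`; as `h` runs over 𝒮, `g := 𝓕h` runs
over 𝒮 and (for symmetric `A`) the condition on `h` states that the plain-function
Fourier transform of `g` has support disjoint from `A`. -/
def FTsuppDist (n : ℕ) (T : SchwartzMap (En n) ℂ →L[ℝ] ℂ) (A : Set (En n)) : Prop :=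
  ∀ g : SchwartzMap (En n) ℂ, tsupport (paperFT n (⇑g)) ∩ A = ∅ → T g = 0

/-- `supp 𝓕(R_s T) ⊆ A` for a tempered distribution `T`, via duality:
`𝓕(R_s T)(h) = T(R_sᵗ 𝓕 h)`; substituting `g = R_sᵗ(𝓕h)`, the test function `h` has
(up to a nonzero constant and for symmetric `A`) the same support as
`ξ ↦ ∫ e^{i x·ξ} s^{τn−τn/p} e^{−i s x·η} g(s^τ(x−y)) dx`, which must avoid `A`. -/
def FTRsSuppDist (n : ℕ) (p τ : ℝ) (y η : En n) (s : ℝ)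
    (T : SchwartzMap (En n) ℂ →L[ℝ] ℂ) (A : Set (En n)) : Prop :=
  ∀ g : SchwartzMap (En n) ℂ,
    tsupport (fun ξ : En n =>
        ∫ x : En n, Complex.exp (Complex.I * ((inner ℝ x ξ : ℝ) : ℂ)) *
          (((s ^ (τ * n - τ * n / p) : ℝ) : ℂ) *
            Complex.exp (-(Complex.I * (s : ℂ) * ((inner ℝ x η : ℝ) : ℂ))) *
            g ((s ^ τ : ℝ) • (x - y)))) ∩ A = ∅ →
    T g = 0

lemma aux_core (n : ℕ) (s a : ℝ) (ha : 0 < a) (y η : En n) (C : ℂ) (g : En n → ℂ) (ξ : En n) :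
    (∫ x : En n, Complex.exp (Complex.I * ((inner ℝ x ξ : ℝ) : ℂ)) *
        (C * Complex.exp (-(Complex.I * (s : ℂ) * ((inner ℝ x η : ℝ) : ℂ))) *
          g (a • (x - y))))
    = (C * Complex.exp (Complex.I * ((inner ℝ y (ξ - s • η) : ℝ) : ℂ)) *
        (((a ^ n : ℝ)⁻¹ : ℝ) : ℂ)) *
      paperFT n g (-(a⁻¹) • (ξ - s • η)) := by
  set θ : En n := ξ - s • η with hθ
  have hstep : ∀ x : En n,
      Complex.exp (Complex.I * ((inner ℝ x ξ : ℝ) : ℂ)) *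
        (C * Complex.exp (-(Complex.I * (s : ℂ) * ((inner ℝ x η : ℝ) : ℂ))) *
          g (a • (x - y)))
      = (C * Complex.exp (Complex.I * ((inner ℝ y θ : ℝ) : ℂ))) *
          (Complex.exp (Complex.I * ((inner ℝ (x - y) θ : ℝ) : ℂ)) * g (a • (x - y))) := by
    intro x
    have h1 : (inner ℝ (x - y) θ : ℝ) = (inner ℝ x ξ : ℝ) - s * (inner ℝ x η : ℝ) - (inner ℝ y θ : ℝ) := by
      simp only [hθ, inner_sub_left, inner_sub_right, real_inner_smul_right]
      ring
    have : Complex.I * ((inner ℝ x ξ : ℝ) : ℂ) + -(Complex.I * (s : ℂ) * ((inner ℝ x η : ℝ) : ℂ))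
        = Complex.I * ((inner ℝ y θ : ℝ) : ℂ) + Complex.I * ((inner ℝ (x - y) θ : ℝ) : ℂ) := by
      rw [h1]; push_cast; ring
    have h2 : Complex.exp (Complex.I * ((inner ℝ x ξ : ℝ) : ℂ)) *
        Complex.exp (-(Complex.I * (s : ℂ) * ((inner ℝ x η : ℝ) : ℂ)))
        = Complex.exp (Complex.I * ((inner ℝ y θ : ℝ) : ℂ)) *
          Complex.exp (Complex.I * ((inner ℝ (x - y) θ : ℝ) : ℂ)) := by
      rw [← Complex.exp_add, ← Complex.exp_add, this]
    linear_combination (g (a • (x - y)) * C) * h2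
  simp_rw [hstep]
  rw [MeasureTheory.integral_const_mul]
  have htrans : (∫ x : En n,
      Complex.exp (Complex.I * ((inner ℝ (x - y) θ : ℝ) : ℂ)) * g (a • (x - y)))
      = ∫ u : En n, Complex.exp (Complex.I * ((inner ℝ u θ : ℝ) : ℂ)) * g (a • u) := by
    exact integral_sub_right_eq_self
      (fun u : En n => Complex.exp (Complex.I * ((inner ℝ u θ : ℝ) : ℂ)) * g (a • u)) y
  rw [htrans]
  have hscale : (∫ u : En n, Complex.exp (Complex.I * ((inner ℝ u θ : ℝ) : ℂ)) * g (a • u))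
      = ((a ^ n : ℝ)⁻¹ : ℝ) • ∫ v : En n,
          Complex.exp (Complex.I * ((inner ℝ (a⁻¹ • v) θ : ℝ) : ℂ)) * g v := by
    have := MeasureTheory.Measure.integral_comp_smul_of_nonneg (μ := (volume : Measure (En n)))
      (fun v : En n => Complex.exp (Complex.I * ((inner ℝ (a⁻¹ • v) θ : ℝ) : ℂ)) * g v) a
      (hR := ha.le)
    rw [finrank_euclideanSpace_fin] at this
    rw [← this]
    congr 1
    ext u
    congr 3
    rw [smul_smul, inv_mul_cancel₀ ha.ne', one_smul]
  rw [hscale]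
  have hFT : (∫ v : En n, Complex.exp (Complex.I * ((inner ℝ (a⁻¹ • v) θ : ℝ) : ℂ)) * g v)
      = paperFT n g (-(a⁻¹) • θ) := by
    unfold paperFT
    congr 1
    ext v
    congr 2
    have : (inner ℝ v (-(a⁻¹) • θ) : ℝ) = -(inner ℝ (a⁻¹ • v) θ : ℝ) := by
      rw [real_inner_smul_right, real_inner_smul_left]; ring
    rw [this]; push_cast; ring
  rw [hFT, Complex.real_smul]
  push_cast
  ring

lemma aux_main (n : ℕ) (p τ : ℝ) (y η : En n) (s : ℝ) (hs : 0 < s)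
    (T : SchwartzMap (En n) ℂ →L[ℝ] ℂ)
    (hsupp : FTsuppDist n T {ξ : En n | 1 / 2 < ‖ξ‖ ∧ ‖ξ‖ < 1})
    (A : Set (En n))
    (hA : ∀ w : En n, 1 / 2 < ‖w‖ → ‖w‖ < 1 → s • η - (s ^ τ : ℝ) • w ∈ A) :
    FTRsSuppDist n p τ y η s T A := by
  intro g hdisj
  set a : ℝ := s ^ τ with ha'
  have ha : 0 < a := Real.rpow_pos_of_pos hs τ
  set C : ℂ := (((s ^ (τ * n - τ * n / p) : ℝ) : ℂ)) with hC'
  have hC : C ≠ 0 := by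
    simp only [hC', ne_eq, Complex.ofReal_eq_zero]
    exact (Real.rpow_pos_of_pos hs _).ne'
  set F : En n → ℂ := fun ξ : En n =>
      ∫ x : En n, Complex.exp (Complex.I * ((inner ℝ x ξ : ℝ) : ℂ)) *
        (C * Complex.exp (-(Complex.I * (s : ℂ) * ((inner ℝ x η : ℝ) : ℂ))) *
          g ((a : ℝ) • (x - y))) with hF'
  have hFeq : ∀ ξ : En n, F ξ
      = (C * Complex.exp (Complex.I * ((inner ℝ y (ξ - s • η) : ℝ) : ℂ)) *
          (((a ^ n : ℝ)⁻¹ : ℝ) : ℂ)) * paperFT n (⇑g) (-(a⁻¹) • (ξ - s • η)) :=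
    fun ξ => aux_core n s a ha y η C (⇑g) ξ
  apply hsupp g
  rw [Set.eq_empty_iff_forall_notMem]
  rintro w ⟨hwsupp, hw1, hw2⟩
  set M : En n → En n := fun w' => s • η - a • w' with hM'
  have hMcont : Continuous M := continuous_const.sub (continuous_id.const_smul a)
  have hMsub : M '' Function.support (paperFT n (⇑g)) ⊆ Function.support F := by
    rintro _ ⟨w', hw', rfl⟩
    have hMw : -(a⁻¹) • (M w' - s • η) = w' := by
      simp only [hM']
      rw [sub_sub_cancel_left, neg_smul, smul_neg, neg_neg, smul_smul,
        inv_mul_cancel₀ ha.ne', one_smul]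
    simp only [Function.mem_support, hFeq (M w'), hMw]
    exact mul_ne_zero (mul_ne_zero (mul_ne_zero hC (Complex.exp_ne_zero _))
      (by simpa using (inv_pos.mpr (pow_pos ha n)).ne')) hw'
  have hξsupp : M w ∈ tsupport F := by
    have h1 : M w ∈ M '' closure (Function.support (paperFT n (⇑g))) := ⟨w, hwsupp, rfl⟩
    have h2 := image_closure_subset_closure_image hMcont
      (s := Function.support (paperFT n (⇑g))) h1
    exact closure_mono hMsub h2
  have hξA : M w ∈ A := hA w hw1 hw2
  have hmem := Set.mem_inter hξsupp hξA
  rw [hdisj] at hmem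
  exact hmem

lemma aux_mono (n : ℕ) (p τ : ℝ) (y η : En n) (s : ℝ)
    (T : SchwartzMap (En n) ℂ →L[ℝ] ℂ) {A B : Set (En n)}
    (h : FTRsSuppDist n p τ y η s T A) (hAB : A ⊆ B) :
    FTRsSuppDist n p τ y η s T B := by
  intro g hd
  refine h g (Set.eq_empty_of_subset_empty ?_)
  rw [← hd]
  exact Set.inter_subset_inter_right _ hAB

lemma aux_cover (n : ℕ) (r : ℝ) (hr : 0 < r) :
    ∃ m : ℕ, {ξ : En n | r < ‖ξ‖ ∧ ‖ξ‖ < 4 * r}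
      ⊆ Kset n m ∪ Kset n (m + 1) ∪ Kset n (m + 2) := by
  by_cases hr2 : r ≤ 2
  · refine ⟨0, ?_⟩
    rintro ξ ⟨h1, h2⟩
    by_cases hx : ‖ξ‖ ≤ 2
    · exact Or.inl (Or.inl hx)
    · refine Or.inr ?_
      show ξ ∈ Kset n (1 + 1)
      push_neg at hx
      constructor
      · norm_num; linarith
      · norm_num; linarith
  · push_neg at hr2
    set k : ℤ := Int.log 2 r with hk'
    have h2k : (2 : ℝ) ^ k ≤ r := by
      have := Int.zpow_log_le_self (b := 2) (R := ℝ) (by norm_num) hr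
      norm_num at this
      exact this
    have hk1 : r < (2 : ℝ) ^ (k + 1) := by
      have := Int.lt_zpow_succ_log_self (b := 2) (R := ℝ) (by norm_num) r
      norm_num at this
      exact this
    have hknn : 0 ≤ k := by
      by_contra hneg
      push_neg at hneg
      have : (2 : ℝ) ^ (k + 1) ≤ (2 : ℝ) ^ (0 : ℤ) :=
        zpow_le_zpow_right₀ one_le_two (by omega)
      rw [zpow_zero] at this
      linarith
    have hkt : ((k.toNat : ℕ) : ℤ) = k := Int.toNat_of_nonneg hknn
    refine ⟨k.toNat + 1, ?_⟩
    rintro ξ ⟨h1, h2⟩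
    by_cases hmid : ‖ξ‖ ≤ (2 : ℝ) ^ (k + 2)
    · refine Or.inl (Or.inl ?_)
      show ξ ∈ Kset n (k.toNat + 1)
      refine ⟨?_, ?_⟩
      · rw [hkt]; linarith
      · rw [hkt]; exact hmid
    · push_neg at hmid
      refine Or.inr ?_
      show ξ ∈ Kset n ((k.toNat + 2) + 1)
      have e3 : (2 : ℝ) ^ (k + 3) = (2 : ℝ) ^ (k + 1) * 4 := by
        rw [show k + 3 = (k + 1) + 2 by ring, zpow_add₀ (two_ne_zero)]
        norm_num
      have e4 : (2 : ℝ) ^ (k + 3) ≤ (2 : ℝ) ^ (k + 4) :=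
        zpow_le_zpow_right₀ one_le_two (by omega)
      refine ⟨?_, ?_⟩
      · rw [show ((k.toNat + 2 : ℕ) : ℤ) = k + 2 by omega]
        exact hmid.le
      · rw [show ((k.toNat + 2 : ℕ) : ℤ) + 2 = k + 4 by omega]
        have : ‖ξ‖ < (2 : ℝ) ^ (k + 3) := by
          rw [e3]
          calc ‖ξ‖ < 4 * r := h2
          _ < 4 * (2 : ℝ) ^ (k + 1) := by linarith
          _ = (2 : ℝ) ^ (k + 1) * 4 := by ring
        linarith

theorem statement_9 (n : ℕ) (hn : 1 ≤ n) (p τ : ℝ) (hp : 1 < p)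
    (hτ : 0 < τ) (hτ3 : τ < 1 / 3) (y η : En n)
    (T : SchwartzMap (En n) ℂ →L[ℝ] ℂ)
    (hsupp : FTsuppDist n T {ξ : En n | 1 / 2 < ‖ξ‖ ∧ ‖ξ‖ < 1}) :
    (∃ s₀ : ℝ, 0 < s₀ ∧ ∀ s : ℝ, s₀ ≤ s → ∃ m : ℕ,
        FTRsSuppDist n p τ y η s T (Kset n m ∪ Kset n (m + 1) ∪ Kset n (m + 2))) ∧
    (η = 0 → ∀ s : ℝ, 0 < s →
        FTRsSuppDist n p τ y η s T {ξ : En n | s ^ τ / 2 < ‖ξ‖ ∧ ‖ξ‖ < s ^ τ}) ∧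
    (η ≠ 0 → ∀ s : ℝ, 0 < s → 2 * s ^ τ < s * ‖η‖ →
        FTRsSuppDist n p τ y η s T
          {ξ : En n | s * ‖η‖ / 2 < ‖ξ‖ ∧ ‖ξ‖ < 2 * s * ‖η‖}) := by
  -- part 2 : η = 0
  have part2 : η = 0 → ∀ s : ℝ, 0 < s →
      FTRsSuppDist n p τ y η s T {ξ : En n | s ^ τ / 2 < ‖ξ‖ ∧ ‖ξ‖ < s ^ τ} := by
    intro hη s hs
    refine aux_main n p τ y η s hs T hsupp _ ?_
    intro w hw1 hw2
    have ha : (0 : ℝ) < s ^ τ := Real.rpow_pos_of_pos hs τ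
    have : s • η - (s ^ τ : ℝ) • w = -((s ^ τ : ℝ) • w) := by rw [hη, smul_zero, zero_sub]
    rw [Set.mem_setOf_eq, this, norm_neg, norm_smul, Real.norm_of_nonneg ha.le]
    constructor
    · nlinarith
    · nlinarith
  -- part 3 : η ≠ 0
  have part3 : η ≠ 0 → ∀ s : ℝ, 0 < s → 2 * s ^ τ < s * ‖η‖ →
      FTRsSuppDist n p τ y η s T
        {ξ : En n | s * ‖η‖ / 2 < ‖ξ‖ ∧ ‖ξ‖ < 2 * s * ‖η‖} := by
    intro hη s hs hlt
    refine aux_main n p τ y η s hs T hsupp _ ?_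
    intro w hw1 hw2
    have ha : (0 : ℝ) < s ^ τ := Real.rpow_pos_of_pos hs τ
    have hηn : (0 : ℝ) < ‖η‖ := norm_pos_iff.mpr hη
    have hsn : ‖s • η‖ = s * ‖η‖ := by
      rw [norm_smul, Real.norm_of_nonneg hs.le]
    have haw : ‖(s ^ τ : ℝ) • w‖ = (s ^ τ) * ‖w‖ := by
      rw [norm_smul, Real.norm_of_nonneg ha.le]
    have hub : ‖s • η - (s ^ τ : ℝ) • w‖ ≤ s * ‖η‖ + (s ^ τ) * ‖w‖ := by
      calc ‖s • η - (s ^ τ : ℝ) • w‖ ≤ ‖s • η‖ + ‖(s ^ τ : ℝ) • w‖ := norm_sub_le _ _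
      _ = s * ‖η‖ + (s ^ τ) * ‖w‖ := by rw [hsn, haw]
    have hlb : s * ‖η‖ - (s ^ τ) * ‖w‖ ≤ ‖s • η - (s ^ τ : ℝ) • w‖ := by
      calc s * ‖η‖ - (s ^ τ) * ‖w‖ = ‖s • η‖ - ‖(s ^ τ : ℝ) • w‖ := by rw [hsn, haw]
      _ ≤ ‖s • η - (s ^ τ : ℝ) • w‖ := norm_sub_norm_le _ _
    rw [Set.mem_setOf_eq]
    constructor
    · nlinarith
    · nlinarith
  refine ⟨?_, part2, part3⟩
  -- part 1
  by_cases hη : η = 0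
  · refine ⟨1, one_pos, ?_⟩
    intro s hs1
    have hs : (0 : ℝ) < s := lt_of_lt_of_le one_pos hs1
    have ha : (0 : ℝ) < s ^ τ := Real.rpow_pos_of_pos hs τ
    obtain ⟨m, hm⟩ := aux_cover n (s ^ τ / 2) (by linarith)
    refine ⟨m, aux_mono n p τ y η s T (part2 hη s hs) ?_⟩
    refine subset_trans ?_ hm
    intro ξ hξ
    rw [Set.mem_setOf_eq] at hξ ⊢
    exact ⟨hξ.1, by linarith [hξ.2]⟩
  · have hηn : (0 : ℝ) < ‖η‖ := norm_pos_iff.mpr hη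
    have h1τ : (0 : ℝ) < 1 - τ := by linarith
    set c : ℝ := 2 / ‖η‖ with hc'
    have hc : 0 < c := by positivity
    refine ⟨max 1 (c ^ (1 / (1 - τ)) + 1), lt_max_of_lt_left one_pos, ?_⟩
    intro s hs0
    have hs1 : (1 : ℝ) ≤ s := le_trans (le_max_left _ _) hs0
    have hs : (0 : ℝ) < s := lt_of_lt_of_le one_pos hs1
    have hsc : c ^ (1 / (1 - τ)) + 1 ≤ s := le_trans (le_max_right _ _) hs0
    have hclt : c < s ^ (1 - τ) := by
      have h1 : c = (c ^ (1 / (1 - τ))) ^ (1 - τ) := by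
        rw [← Real.rpow_mul hc.le, one_div_mul_cancel h1τ.ne', Real.rpow_one]
      have h2 : (c ^ (1 / (1 - τ))) ^ (1 - τ) < (c ^ (1 / (1 - τ)) + 1) ^ (1 - τ) :=
        Real.rpow_lt_rpow (Real.rpow_nonneg hc.le _) (by linarith) h1τ
      have h3 : (c ^ (1 / (1 - τ)) + 1) ^ (1 - τ) ≤ s ^ (1 - τ) :=
        Real.rpow_le_rpow (by positivity) hsc h1τ.le
      calc c = (c ^ (1 / (1 - τ))) ^ (1 - τ) := h1
      _ < (c ^ (1 / (1 - τ)) + 1) ^ (1 - τ) := h2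
      _ ≤ s ^ (1 - τ) := h3
    have hkey : 2 * s ^ τ < s * ‖η‖ := by
      have ha : (0 : ℝ) < s ^ τ := Real.rpow_pos_of_pos hs τ
      have h4 : 2 < s ^ (1 - τ) * ‖η‖ := by
        rw [hc'] at hclt
        rw [div_lt_iff₀ hηn] at hclt
        linarith
      have h5 : s ^ (1 - τ) * s ^ τ = s := by
        rw [← Real.rpow_add hs, sub_add_cancel, Real.rpow_one]
      nlinarith
    obtain ⟨m, hm⟩ := aux_cover n (s * ‖η‖ / 2) (by positivity)
    refine ⟨m, aux_mono n p τ y η s T (part3 hη s hs hkey) ?_⟩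
    refine subset_trans ?_ hm
    intro ξ hξ
    rw [Set.mem_setOf_eq] at hξ ⊢
    exact ⟨hξ.1, by linarith [hξ.2]⟩


end
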